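/- Let G=(V,E) be a connected simple graph and consider an MRPP instance with n robots having pairwise-distinct start vertices s_1,…,s_n and pairwise-distinct goal vertices g_1,…,g_n. Suppose the instance is well-formed: for every robot i there exists a path in G from s_i to g_i that does not pass through any vertex of {s_j : j ≠ i} ∪ {g_j : j ≠ i}. Then the instance is solvable: there exist a time horizon T ∈ ℕ and trajectories p_i : {0,1,…,T} → V for i = 1,…,n such that p_i(0) = s_i, p_i(T) = g_i, for every t the vertex p_i(t+1) equals p_i(t) or is adjacent to p_i(t) in G, no two robots occupy the same vertex at the same time step (p_i(t) ≠ p_j(t) for all i ≠ j and all t), and no two robots swap along an edge in the same step (there are no i ≠ j and t with p_i(t+1) = p_j(t) and p_j(t+1) = p_i(t)). -/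
import Mathlib


/-- `p` (defined on time steps `0, …, T`) is a solution of the multi-robot path
planning instance on `G` with start vertices `s` and goal vertices `g`: every robot
starts at its start, ends at its goal, at each step stays put or moves along an edge
of `G`, no two robots occupy the same vertex at the same time step, and no two robots
swap along an edge in the same step. -/
def IsMRPPSolution {V : Type*} (G : SimpleGraph V) {n : ℕ} (s g : Fin n → V)
    (T : ℕ) (p : Fin n → ℕ → V) : Prop :=
  (∀ i, p i 0 = s i) ∧ (∀ i, p i T = g i) ∧
  (∀ i, ∀ t < T, p i (t + 1) = p i t ∨ G.Adj (p i t) (p i (t + 1))) ∧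
  (∀ i j, i ≠ j → ∀ t ≤ T, p i t ≠ p j t) ∧
  (∀ i j, i ≠ j → ∀ t < T, ¬ (p i (t + 1) = p j t ∧ p j (t + 1) = p i t))

/-- A well-formed MRPP instance on a connected graph — one in which each robot's start
and goal are joined by a path avoiding all other robots' starts and goals — is
solvable. -/
theorem wellformed_mrpp_solvable {V : Type*} [Fintype V] (G : SimpleGraph V)
    (hG : G.Connected) (n : ℕ) (s g : Fin n → V)
    (hs : Function.Injective s) (hg : Function.Injective g)
    (hwf : ∀ i : Fin n, ∃ q : G.Walk (s i) (g i),
      ∀ w ∈ q.support, ∀ j : Fin n, j ≠ i → w ≠ s j ∧ w ≠ g j) :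
    ∃ (T : ℕ) (p : Fin n → ℕ → V), IsMRPPSolution G s g T p := by
  classical
  choose Q hQ using hwf
  set len : Fin n → ℕ := fun i => (Q i).length with hlen
  set o : Fin n → ℕ := fun i => ∑ j ∈ Finset.univ.filter (· < i), len j with ho
  set T : ℕ := ∑ j, len j with hT
  set p : Fin n → ℕ → V := fun i t => (Q i).getVert (t - o i) with hp
  -- every position is in the support of the walk
  have hsupp : ∀ i t, p i t ∈ (Q i).support := by
    intro i t
    rw [SimpleGraph.Walk.mem_support_iff_exists_getVert]
    by_cases h : t - o i ≤ (Q i).length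
    · exact ⟨t - o i, rfl, h⟩
    · exact ⟨(Q i).length, by
        rw [hp]; simp only
        rw [(Q i).getVert_of_length_le (le_of_not_ge h), (Q i).getVert_length], le_refl _⟩
  -- key window ordering
  have hwin : ∀ i j : Fin n, i < j → o i + len i ≤ o j := by
    intro i j hij
    have hsub : insert i (Finset.univ.filter (· < i)) ⊆ Finset.univ.filter (· < j) := by
      intro k hk
      simp only [Finset.mem_insert, Finset.mem_filter, Finset.mem_univ, true_and] at hk ⊢
      rcases hk with rfl | hk
      · exact hij
      · exact lt_trans hk hij
    have := Finset.sum_le_sum_of_subset hsub (f := len)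
    rwa [Finset.sum_insert (by simp), add_comm] at this
  have hwinT : ∀ i : Fin n, o i + len i ≤ T := by
    intro i
    have hsub : insert i (Finset.univ.filter (· < i)) ⊆ Finset.univ := fun k _ =>
      Finset.mem_univ k
    have := Finset.sum_le_sum_of_subset hsub (f := len)
    rwa [Finset.sum_insert (by simp), add_comm] at this
  have hpre : ∀ i t, t ≤ o i → p i t = s i := by
    intro i t h
    rw [hp]; simp only
    rw [Nat.sub_eq_zero_of_le h, SimpleGraph.Walk.getVert_zero]
  have hpost : ∀ i t, o i + len i ≤ t → p i t = g i := by
    intro i t h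
    rw [hp]; simp only
    have hli : len i = (Q i).length := rfl
    rw [(Q i).getVert_of_length_le (by omega)]
  refine ⟨T, p, ?_, ?_, ?_, ?_, ?_⟩
  · intro i; exact hpre i 0 (Nat.zero_le _)
  · intro i; exact hpost i T (hwinT i)
  · intro i t _
    by_cases h1 : t + 1 ≤ o i
    · left; rw [hpre i _ h1, hpre i t (by omega)]
    · by_cases h2 : o i + len i ≤ t
      · left; rw [hpost i _ (by omega), hpost i t h2]
      · right
        have ht : o i ≤ t := by omega
        have : t + 1 - o i = (t - o i) + 1 := by omega
        rw [hp]; simp only [this]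
        have hli : len i = (Q i).length := rfl
        exact (Q i).adj_getVert_succ (by omega)
  · -- no vertex collisions
    intro i j hij t _
    -- at least one of the two robots is at rest
    rcases lt_or_gt_of_ne hij with h | h
    · -- i < j
      by_cases hc : t ≤ o j
      · rw [hpre j t hc]
        exact (hQ i (p i t) (hsupp i t) j (Ne.symm hij)).1
      · have : o i + len i ≤ t := le_trans (hwin i j h) (by omega)
        rw [hpost i t this]
        intro hcontra
        exact (hQ j (p j t) (hsupp j t) i hij).2 hcontra.symm
    · -- j < i
      by_cases hc : t ≤ o i
      · rw [hpre i t hc]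
        intro hcontra
        exact (hQ j (p j t) (hsupp j t) i hij).1 hcontra.symm
      · have : o j + len j ≤ t := le_trans (hwin j i h) (by omega)
        rw [hpost j t this]
        exact (hQ i (p i t) (hsupp i t) j (Ne.symm hij)).2
  · -- no swaps
    intro i j hij t _ ⟨h1, h2⟩
    rcases lt_or_gt_of_ne hij with h | h
    · by_cases hc : t < o j
      · -- robot j at rest at s j
        rw [hpre j t (by omega)] at h1
        exact (hQ i (p i (t+1)) (hsupp i (t+1)) j (Ne.symm hij)).1 h1
      · have : o i + len i ≤ t := le_trans (hwin i j h) (by omega)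
        rw [hpost i t this] at h2
        exact (hQ j (p j (t+1)) (hsupp j (t+1)) i hij).2 h2
    · by_cases hc : t < o i
      · rw [hpre i t (by omega)] at h2
        exact (hQ j (p j (t+1)) (hsupp j (t+1)) i hij).1 h2
      · have : o j + len j ≤ t := le_trans (hwin j i h) (by omega)
        rw [hpost j t this] at h1
        exact (hQ i (p i (t+1)) (hsupp i (t+1)) j (Ne.symm hij)).2 h1
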